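/- Let R_z(θ) = diag(e^{-iθ/2}, e^{iθ/2}) and let U = (1/r)·[[α, -β†],[β, α†]] be a unitary matrix with r > 0, |α|² + |β|² = r². Then ‖U - R_z(θ)‖² = 2 - 2·Re(e^{iθ/2}·α/r), where ‖·‖ is the operator norm. Consequently, ‖U - R_z(θ)‖ ≤ ε if and only if Re(e^{iθ/2}·α/r) ≥ 1 - ε²/2. -/

import Mathlib

set_option maxHeartbeats 1000000
set_option synthInstance.maxHeartbeats 400000

noncomputable def opNorm (M : Matrix (Fin 2) (Fin 2) ℂ) : ℝ :=
  ‖Matrix.toEuclideanCLM (𝕜 := ℂ) (n := Fin 2) M‖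

lemma aux_opNorm_sq (a b : ℂ) :
    opNorm !![a, -(starRingEnd ℂ) b; b, (starRingEnd ℂ) a] ^ 2
      = Complex.normSq a + Complex.normSq b := by
  set M : Matrix (Fin 2) (Fin 2) ℂ := !![a, -(starRingEnd ℂ) b; b, (starRingEnd ℂ) a] with hM
  set T := Matrix.toEuclideanCLM (𝕜 := ℂ) (n := Fin 2) M with hT
  have hMM : M.conjTranspose * M = (((Complex.normSq a + Complex.normSq b : ℝ) : ℂ)) • 1 := by
    ext i j
    fin_cases i <;> fin_cases j <;>
      simp [hM, Matrix.mul_apply, Fin.sum_univ_succ, Matrix.one_apply,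
        Complex.normSq_eq_conj_mul_self] <;> ring
  have h1 : opNorm M * opNorm M = ‖star T * T‖ := CStarRing.norm_star_mul_self.symm
  have h2 : star T * T = Matrix.toEuclideanCLM (𝕜 := ℂ) (n := Fin 2) (M.conjTranspose * M) := by
    rw [map_mul, ← map_star]; rfl
  have h3 : ‖Matrix.toEuclideanCLM (𝕜 := ℂ) (n := Fin 2) (M.conjTranspose * M)‖
      = Complex.normSq a + Complex.normSq b := by
    rw [hMM, map_smul, map_one, ← Algebra.algebraMap_eq_smul_one, norm_algebraMap']
    rw [Complex.norm_real]; exact Real.norm_of_nonneg (add_nonneg (Complex.normSq_nonneg a) (Complex.normSq_nonneg b))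
  rw [sq, h1, h2, h3]

theorem stmt17 (θ r : ℝ) (α β : ℂ) (hr : 0 < r)
    (hnorm : ‖α‖ ^ 2 + ‖β‖ ^ 2 = r ^ 2)
    (U Rz : Matrix (Fin 2) (Fin 2) ℂ)
    (hU : U = ((r : ℂ))⁻¹ • !![α, -(starRingEnd ℂ) β; β, (starRingEnd ℂ) α])
    (hRz : Rz = !![Complex.exp (-(Complex.I * θ) / 2), 0;
                   0, Complex.exp (Complex.I * θ / 2)]) :
    opNorm (U - Rz) ^ 2 = 2 - 2 * (Complex.exp (Complex.I * θ / 2) * α / r).re ∧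
    ∀ ε : ℝ, 0 ≤ ε →
      (opNorm (U - Rz) ≤ ε ↔
        (Complex.exp (Complex.I * θ / 2) * α / r).re ≥ 1 - ε ^ 2 / 2) := by
  set a : ℂ := α / r - Complex.exp (-(Complex.I * θ) / 2) with ha
  set b : ℂ := β / r with hb
  have hconj_exp : (starRingEnd ℂ) (Complex.exp (-(Complex.I * θ) / 2))
      = Complex.exp (Complex.I * θ / 2) := by
    rw [← Complex.exp_conj]
    congr 1
    rw [map_div₀, map_neg, map_mul, Complex.conj_I, Complex.conj_ofReal, map_ofNat]
    ring
  have hkey : Complex.exp (Complex.I * θ * (1 / 2))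
      = (starRingEnd ℂ) (Complex.exp (Complex.I * θ * (-1 / 2))) := by
    rw [← Complex.exp_conj]
    congr 1
    simp [Complex.conj_I, map_ofNat]
    ring
  have hdiff : U - Rz = !![a, -(starRingEnd ℂ) b; b, (starRingEnd ℂ) a] := by
    subst hU hRz
    ext i j
    fin_cases i <;> fin_cases j <;>
      simp [ha, hb, div_eq_inv_mul, map_mul, Complex.conj_ofReal] <;>
      try ring
    exact hkey
  have hre : r ≠ 0 := ne_of_gt hr
  have hsq : opNorm (U - Rz) ^ 2
      = 2 - 2 * (Complex.exp (Complex.I * θ / 2) * α / r).re := by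
    rw [hdiff, aux_opNorm_sq]
    have h1 : Complex.normSq a
        = Complex.normSq (α / r) + 1
          - 2 * (Complex.exp (Complex.I * θ / 2) * α / r).re := by
      rw [ha, Complex.normSq_sub]
      have he : Complex.normSq (Complex.exp (-(Complex.I * θ) / 2)) = 1 := by
        rw [← Complex.sq_norm, Complex.norm_exp]
        simp
      rw [he, hconj_exp]
      ring_nf
    have h2 : Complex.normSq (α / r) + Complex.normSq b = 1 := by
      rw [hb, Complex.normSq_div, Complex.normSq_div]
      have : Complex.normSq (r : ℂ) = r ^ 2 := by
        rw [Complex.normSq_ofReal, sq]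
      rw [this, ← add_div, ← Complex.sq_norm, ← Complex.sq_norm, hnorm,
        div_self (by positivity)]
    have := h2
    rw [h1]
    linarith
  refine ⟨hsq, fun ε hε => ?_⟩
  have hnn : 0 ≤ opNorm (U - Rz) := norm_nonneg _
  constructor
  · intro h
    have : opNorm (U - Rz) ^ 2 ≤ ε ^ 2 := by
      apply pow_le_pow_left₀ hnn h
    rw [hsq] at this
    linarith
  · intro h
    have h2 : opNorm (U - Rz) ^ 2 ≤ ε ^ 2 := by rw [hsq]; linarith
    exact (pow_le_pow_iff_left₀ hnn hε two_ne_zero).mp h2
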